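/- Let S be a set of points in a finite projective plane of order n such that through each point of S there exist at least s lines meeting S in exactly one point. Then |S| ≤ 1 + (n/(2s))·((s−1) + √(4sn − 3s² + 2s + 1)). -/

import Mathlib

open Configuration

private lemma offDiag_card_add {α : Type*} [DecidableEq α] (A : Finset α) :
    A.offDiag.card + A.card = A.card * A.card := by
  rcases Nat.eq_zero_or_pos A.card with h | h
  · simp [Finset.offDiag_card, h]
  · rw [Finset.offDiag_card, Nat.sub_add_cancel (Nat.le_mul_of_pos_left _ h)]

set_option maxHeartbeats 4000000 in
theorem semiarc_bound (P L : Type*) [Membership P L]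
    [Fintype P] [Fintype L] [ProjectivePlane P L]
    (n s : ℕ) (hn : ProjectivePlane.order P L = n) (hs : 1 ≤ s)
    (S : Finset P)
    (hS : ∀ p ∈ S, s ≤ Nat.card {ℓ : L // p ∈ ℓ ∧ Nat.card {q : P // q ∈ S ∧ q ∈ ℓ} = 1}) :
    (S.card : ℝ) ≤ 1 + ((n : ℝ) / (2 * s)) *
        (((s : ℝ) - 1) + Real.sqrt (4 * s * n - 3 * (s : ℝ) ^ 2 + 2 * s + 1)) := by
  classical
  have hs' : (1 : ℝ) ≤ (s : ℝ) := by exact_mod_cast hs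
  have hsqrt := Real.sqrt_nonneg (4 * (s : ℝ) * n - 3 * (s : ℝ) ^ 2 + 2 * s + 1)
  rcases S.eq_empty_or_nonempty with rfl | hne
  · have h1 : (0 : ℝ) ≤ (n : ℝ) / (2 * s) := by positivity
    have h2 : (0 : ℝ) ≤ ((s : ℝ) - 1) + Real.sqrt (4 * s * n - 3 * (s : ℝ) ^ 2 + 2 * s + 1) := by
      linarith
    have := mul_nonneg h1 h2
    simp only [Finset.card_empty, Nat.cast_zero]
    linarith
  -- basic quantities
  have hk : 1 ≤ S.card := Finset.card_pos.mpr hne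
  have hn2 : 2 ≤ n := by
    have := ProjectivePlane.one_lt_order P L
    omega
  -- conversion of Nat.card conditions to Finset cards
  have hNq : ∀ ℓ : L, Nat.card {q : P // q ∈ S ∧ q ∈ ℓ} = (S.filter (· ∈ ℓ)).card := by
    intro ℓ
    rw [Nat.card_eq_fintype_card, Fintype.card_subtype]
    congr 1
    ext q
    simp
  set Tp : P → Finset L :=
    fun p => Finset.univ.filter (fun ℓ => p ∈ ℓ ∧ (S.filter (· ∈ ℓ)).card = 1) with hTpdef
  have hTp : ∀ p ∈ S, s ≤ (Tp p).card := by
    intro p hp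
    have h1 := hS p hp
    have h2 : Nat.card {ℓ : L // p ∈ ℓ ∧ Nat.card {q : P // q ∈ S ∧ q ∈ ℓ} = 1}
        = (Tp p).card := by
      rw [Nat.card_eq_fintype_card, Fintype.card_subtype]
      congr 1
      ext ℓ
      simp only [hTpdef, Finset.mem_filter, Finset.mem_univ, true_and, hNq ℓ]
    omega
  have hTp_mem : ∀ {p : P} {ℓ : L}, ℓ ∈ Tp p → p ∈ ℓ ∧ (S.filter (· ∈ ℓ)).card = 1 := by
    intro p ℓ h
    simpa [hTpdef] using h
  have hpoint : ∀ {p : P} {ℓ : L}, p ∈ S → ℓ ∈ Tp p → S.filter (· ∈ ℓ) = {p} := by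
    intro p ℓ hp hℓ
    obtain ⟨h1, h2⟩ := hTp_mem hℓ
    obtain ⟨a, ha⟩ := Finset.card_eq_one.mp h2
    have hpmem : p ∈ S.filter (· ∈ ℓ) := Finset.mem_filter.mpr ⟨hp, h1⟩
    rw [ha] at hpmem ⊢
    rw [Finset.mem_singleton] at hpmem
    rw [hpmem]
  -- choose s tangent lines through each point of S
  have hFex : ∀ p : P, ∃ t : Finset L, p ∈ S → t ⊆ Tp p ∧ t.card = s := by
    intro p
    by_cases hp : p ∈ S
    · obtain ⟨t, ht, hc⟩ := Finset.exists_subset_card_eq (hTp p hp)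
      exact ⟨t, fun _ => ⟨ht, hc⟩⟩
    · exact ⟨∅, fun h => absurd h hp⟩
  choose F hF using hFex
  have hdisj : ∀ p ∈ S, ∀ p' ∈ S, p ≠ p' → Disjoint (F p) (F p') := by
    intro p hp p' hp' hne'
    rw [Finset.disjoint_left]
    intro ℓ h1 h2
    have e1 := hpoint hp ((hF p hp).1 h1)
    have e2 := hpoint hp' ((hF p' hp').1 h2)
    exact hne' (Finset.singleton_injective (e1.symm.trans e2))
  set T : Finset L := S.biUnion F with hTdef
  have hTcard : T.card = s * S.card := by
    rw [hTdef, Finset.card_biUnion hdisj]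
    rw [Finset.sum_congr rfl (fun p hp => (hF p hp).2)]
    simp [mul_comm]
  have hTmem : ∀ ℓ ∈ T, ∃ p ∈ S, ℓ ∈ F p := by
    intro ℓ h
    simpa [hTdef] using h
  -- outside points
  set O : Finset P := Finset.univ.filter (· ∉ S) with hOdef
  have hOcard : S.card + O.card = n ^ 2 + n + 1 := by
    have h1 : (Finset.univ.filter (· ∈ S)).card + O.card = Fintype.card P := by
      rw [hOdef]
      exact Finset.card_filter_add_card_filter_not (s := Finset.univ) (p := (· ∈ S))
    have h2 : Finset.univ.filter (· ∈ S) = S := by ext; simp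
    have h3 := ProjectivePlane.card_points P L
    rw [h2] at h1
    rw [hn] at h3
    omega
  -- each line has n + 1 points
  have hline : ∀ ℓ : L, (Finset.univ.filter (· ∈ ℓ) : Finset P).card = n + 1 := by
    intro ℓ
    have h := ProjectivePlane.pointCount_eq P ℓ
    rw [hn] at h
    rw [Configuration.pointCount, Nat.card_eq_fintype_card, Fintype.card_subtype] at h
    exact h
  -- each tangent line has n points outside S
  have htangent_out : ∀ ℓ ∈ T, (O.filter (· ∈ ℓ)).card = n := by
    intro ℓ hℓ
    obtain ⟨p, hp, hpF⟩ := hTmem ℓ hℓ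
    have h1 : (S.filter (· ∈ ℓ)).card = 1 := (hTp_mem ((hF p hp).1 hpF)).2
    have h := Finset.card_filter_add_card_filter_not
      (s := Finset.univ.filter (· ∈ ℓ)) (p := (· ∈ S))
    have e1 : (Finset.univ.filter (· ∈ ℓ)).filter (· ∈ S) = S.filter (· ∈ ℓ) := by
      ext z; simp [and_comm]
    have e2 : (Finset.univ.filter (· ∈ ℓ)).filter (fun z => ¬ z ∈ S) = O.filter (· ∈ ℓ) := by
      ext z; simp [hOdef, and_comm]
    rw [e1, e2, hline ℓ, h1] at h
    omega
  -- the incidence counts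
  set t : P → ℕ := fun z => (T.filter (fun ℓ => z ∈ ℓ)).card with htdef
  have hswap : ∀ (B : Finset L),
      ∑ z ∈ O, (B.filter (fun ℓ => z ∈ ℓ)).card = ∑ ℓ ∈ B, (O.filter (· ∈ ℓ)).card := by
    intro B
    simp_rw [Finset.card_filter]
    exact Finset.sum_comm
  have hSum1 : ∑ z ∈ O, t z = s * S.card * n := by
    rw [htdef]
    rw [hswap T, Finset.sum_congr rfl htangent_out, Finset.sum_const, smul_eq_mul, hTcard]
  -- second moment via pairs of tangents
  have hoffd : ∀ z : P, (T.filter (fun ℓ => z ∈ ℓ)).offDiag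
      = T.offDiag.filter (fun q => z ∈ q.1 ∧ z ∈ q.2) := by
    intro z
    ext q
    simp only [Finset.mem_offDiag, Finset.mem_filter]
    tauto
  have hswap2 : ∑ z ∈ O, (T.filter (fun ℓ => z ∈ ℓ)).offDiag.card
      = ∑ q ∈ T.offDiag, (O.filter (fun z => z ∈ q.1 ∧ z ∈ q.2)).card := by
    simp_rw [hoffd, Finset.card_filter]
    exact Finset.sum_comm
  have hc : ∀ q ∈ T.offDiag, (O.filter (fun z => z ∈ q.1 ∧ z ∈ q.2)).card
      = if ∃ p ∈ S, q.1 ∈ F p ∧ q.2 ∈ F p then 0 else 1 := by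
    intro q hq
    rw [Finset.mem_offDiag] at hq
    obtain ⟨hq1, hq2, hne12⟩ := hq
    obtain ⟨p₁, hp₁, hF₁⟩ := hTmem q.1 hq1
    obtain ⟨p₂, hp₂, hF₂⟩ := hTmem q.2 hq2
    have ht₁ := hTp_mem ((hF p₁ hp₁).1 hF₁)
    have ht₂ := hTp_mem ((hF p₂ hp₂).1 hF₂)
    split_ifs with hsame
    · obtain ⟨p, hp, hpa, hpb⟩ := hsame
      have hpin1 := (hTp_mem ((hF p hp).1 hpa)).1
      have hpin2 := (hTp_mem ((hF p hp).1 hpb)).1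
      rw [Finset.card_eq_zero, Finset.eq_empty_iff_forall_notMem]
      intro z hz
      rw [Finset.mem_filter] at hz
      obtain ⟨hzO, hz1, hz2⟩ := hz
      have hzS : z ∉ S := by
        rw [hOdef] at hzO
        simpa using hzO
      rcases Nondegenerate.eq_or_eq (P := P) (L := L) hpin1 hz1 hpin2 hz2 with h | h
      · exact hzS (h ▸ hp)
      · exact hne12 h
    · have hpne : p₁ ≠ p₂ := fun h => hsame ⟨p₁, hp₁, hF₁, h ▸ hF₂⟩
      obtain ⟨z₀, ⟨hz₀1, hz₀2⟩, huz⟩ :=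
        HasPoints.existsUnique_point (P := P) (L := L) q.1 q.2 hne12
      have hz₀S : z₀ ∉ S := by
        intro hz₀S
        have m1 : z₀ ∈ S.filter (· ∈ q.1) := Finset.mem_filter.mpr ⟨hz₀S, hz₀1⟩
        have m2 : z₀ ∈ S.filter (· ∈ q.2) := Finset.mem_filter.mpr ⟨hz₀S, hz₀2⟩
        rw [hpoint hp₁ ((hF p₁ hp₁).1 hF₁), Finset.mem_singleton] at m1
        rw [hpoint hp₂ ((hF p₂ hp₂).1 hF₂), Finset.mem_singleton] at m2
        exact hpne (m1 ▸ m2)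
      rw [Finset.card_eq_one]
      refine ⟨z₀, ?_⟩
      ext z
      simp only [Finset.mem_filter, Finset.mem_singleton, hOdef, Finset.mem_univ, true_and]
      constructor
      · rintro ⟨hzS, hz1, hz2⟩
        exact huz z ⟨hz1, hz2⟩
      · rintro rfl
        exact ⟨hz₀S, hz₀1, hz₀2⟩
  -- count the pairs with equal tangency point
  have hsame_eq : T.offDiag.filter (fun q => ∃ p ∈ S, q.1 ∈ F p ∧ q.2 ∈ F p)
      = S.biUnion (fun p => (F p).offDiag) := by
    ext q
    simp only [Finset.mem_filter, Finset.mem_offDiag, Finset.mem_biUnion]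
    constructor
    · rintro ⟨⟨_, _, hne'⟩, p, hp, ha, hb⟩
      exact ⟨p, hp, ha, hb, hne'⟩
    · rintro ⟨p, hp, ha, hb, hne'⟩
      have hq1T : q.1 ∈ T := by rw [hTdef]; exact Finset.mem_biUnion.mpr ⟨p, hp, ha⟩
      have hq2T : q.2 ∈ T := by rw [hTdef]; exact Finset.mem_biUnion.mpr ⟨p, hp, hb⟩
      exact ⟨⟨hq1T, hq2T, hne'⟩, p, hp, ha, hb⟩
  have hsamecard : (T.offDiag.filter (fun q => ∃ p ∈ S, q.1 ∈ F p ∧ q.2 ∈ F p)).card + S.card * s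
      = S.card * (s * s) := by
    rw [hsame_eq, Finset.card_biUnion]
    · have : ∀ p ∈ S, (F p).offDiag.card + s = s * s := by
        intro p hp
        have := offDiag_card_add (F p)
        rw [(hF p hp).2] at this
        exact this
      calc (∑ p ∈ S, (F p).offDiag.card) + S.card * s
          = ∑ p ∈ S, ((F p).offDiag.card + s) := by
            rw [Finset.sum_add_distrib, Finset.sum_const, smul_eq_mul]
        _ = ∑ p ∈ S, s * s := Finset.sum_congr rfl this
        _ = S.card * (s * s) := by rw [Finset.sum_const, smul_eq_mul]
    · intro p hp p' hp' hne'
      have hd := hdisj p hp p' hp' hne'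
      show Disjoint (F p).offDiag (F p').offDiag
      rw [Finset.disjoint_left] at hd ⊢
      intro q hq hq'
      rw [Finset.mem_offDiag] at hq hq'
      exact hd hq.1 hq'.1
  -- total number of ordered distinct pairs in T
  have htotalpairs := offDiag_card_add T
  have hsplit := Finset.card_filter_add_card_filter_not
    (s := T.offDiag) (p := fun q => ∃ p ∈ S, q.1 ∈ F p ∧ q.2 ∈ F p)
  -- second moment value
  have hSum2 : ∑ z ∈ O, (T.filter (fun ℓ => z ∈ ℓ)).offDiag.card
      = (T.offDiag.filter (fun q => ¬ ∃ p ∈ S, q.1 ∈ F p ∧ q.2 ∈ F p)).card := by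
    rw [hswap2, Finset.sum_congr rfl hc, Finset.sum_ite, Finset.sum_const_zero,
      Finset.sum_const, smul_eq_mul, mul_one, zero_add]
  -- sum of squares
  have hsq : ∑ z ∈ O, t z * t z
      = (∑ z ∈ O, (T.filter (fun ℓ => z ∈ ℓ)).offDiag.card) + ∑ z ∈ O, t z := by
    rw [← Finset.sum_add_distrib]
    refine Finset.sum_congr rfl fun z _ => ?_
    rw [htdef]
    exact (offDiag_card_add _).symm
  -- gather the numeric facts
  set k := S.card with hkdef
  -- names for casts
  have hkR : (1 : ℝ) ≤ (k : ℝ) := by exact_mod_cast hk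
  have hnR : (2 : ℝ) ≤ (n : ℝ) := by exact_mod_cast hn2
  -- Cauchy-Schwarz
  have hCS : (∑ z ∈ O, (t z : ℝ)) ^ 2 ≤ (O.card : ℝ) * ∑ z ∈ O, (t z : ℝ) ^ 2 :=
    sq_sum_le_card_mul_sum_sq
  -- compute the sums in ℝ
  have hR1 : ∑ z ∈ O, (t z : ℝ) = (s : ℝ) * k * n := by
    rw [← Nat.cast_sum]
    exact_mod_cast congrArg (Nat.cast : ℕ → ℝ) hSum1
  have hR2 : ∑ z ∈ O, (t z : ℝ) ^ 2 = (s : ℝ) ^ 2 * k * ((k : ℝ) - 1) + (s : ℝ) * k * n := by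
    have e0 : ((∑ z ∈ O, t z * t z : ℕ) : ℝ) = ∑ z ∈ O, (t z : ℝ) ^ 2 := by
      rw [Nat.cast_sum]
      exact Finset.sum_congr rfl fun z _ => by push_cast; ring
    have h1N : (∑ z ∈ O, (T.filter (fun ℓ => z ∈ ℓ)).offDiag.card)
        + (T.offDiag.filter (fun q => ∃ p ∈ S, q.1 ∈ F p ∧ q.2 ∈ F p)).card
        = T.offDiag.card := by
      rw [hSum2]
      have hh := Finset.card_filter_add_card_filter_not
        (s := T.offDiag) (p := fun q : L × L => ∃ p ∈ S, q.1 ∈ F p ∧ q.2 ∈ F p)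
      omega
    have h4N : ∑ z ∈ O, t z * t z
        = (∑ z ∈ O, (T.filter (fun ℓ => z ∈ ℓ)).offDiag.card) + s * k * n := by
      rw [hsq, hSum1]
    have hTOc : T.offDiag.card + s * k = (s * k) * (s * k) := by
      have := htotalpairs
      rw [hTcard] at this
      exact this
    have c1 : ((∑ z ∈ O, (T.filter (fun ℓ => z ∈ ℓ)).offDiag.card : ℕ) : ℝ)
        + ((T.offDiag.filter (fun q => ∃ p ∈ S, q.1 ∈ F p ∧ q.2 ∈ F p)).card : ℝ)
        = (T.offDiag.card : ℝ) := by exact_mod_cast congrArg (Nat.cast : ℕ → ℝ) h1N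
    have c2 : ((T.offDiag.filter (fun q => ∃ p ∈ S, q.1 ∈ F p ∧ q.2 ∈ F p)).card : ℝ)
        + (k : ℝ) * s = (k : ℝ) * ((s : ℝ) * s) := by
      exact_mod_cast congrArg (Nat.cast : ℕ → ℝ) hsamecard
    have c3 : (T.offDiag.card : ℝ) + (s : ℝ) * k = ((s : ℝ) * k) * ((s : ℝ) * k) := by
      exact_mod_cast congrArg (Nat.cast : ℕ → ℝ) hTOc
    have c4 : ((∑ z ∈ O, t z * t z : ℕ) : ℝ)
        = ((∑ z ∈ O, (T.filter (fun ℓ => z ∈ ℓ)).offDiag.card : ℕ) : ℝ) + (s : ℝ) * k * n := by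
      exact_mod_cast congrArg (Nat.cast : ℕ → ℝ) h4N
    rw [e0] at c4
    linarith [c1, c2, c3, c4]
  -- the key inequality from Cauchy-Schwarz
  have hOcR : (k : ℝ) + (O.card : ℝ) = (n : ℝ) ^ 2 + n + 1 := by
    exact_mod_cast congrArg (Nat.cast : ℕ → ℝ) hOcard
  rw [hR1, hR2] at hCS
  -- divide by s*k
  have hskpos : (0 : ℝ) < (s : ℝ) * k := by nlinarith
  have hstep1 : (s : ℝ) * k * (n : ℝ) ^ 2
      ≤ (O.card : ℝ) * ((s : ℝ) * ((k : ℝ) - 1) + n) := by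
    refine le_of_mul_le_mul_left ?_ hskpos
    calc (s : ℝ) * k * ((s : ℝ) * k * (n : ℝ) ^ 2) = ((s : ℝ) * k * n) ^ 2 := by ring
      _ ≤ (O.card : ℝ) * ((s : ℝ) ^ 2 * k * ((k : ℝ) - 1) + (s : ℝ) * k * n) := hCS
      _ = (s : ℝ) * k * ((O.card : ℝ) * ((s : ℝ) * ((k : ℝ) - 1) + n)) := by ring
  -- the quadratic inequality
  have hquad : (s : ℝ) * ((k : ℝ) - 1) ^ 2
      ≤ ((s : ℝ) - 1) * n * ((k : ℝ) - 1) + (n : ℝ) ^ 2 * ((n : ℝ) - s + 1) := by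
    nlinarith [hstep1, hOcR]
  -- complete the square
  have hD : (2 * (s : ℝ) * ((k : ℝ) - 1) - ((s : ℝ) - 1) * n) ^ 2
      ≤ (n : ℝ) ^ 2 * (4 * (s : ℝ) * n - 3 * (s : ℝ) ^ 2 + 2 * s + 1) := by
    nlinarith [mul_le_mul_of_nonneg_left hquad (by positivity : (0 : ℝ) ≤ 4 * (s : ℝ))]
  have hstep4 : 2 * (s : ℝ) * ((k : ℝ) - 1) - ((s : ℝ) - 1) * n
      ≤ (n : ℝ) * Real.sqrt (4 * (s : ℝ) * n - 3 * (s : ℝ) ^ 2 + 2 * s + 1) := by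
    calc 2 * (s : ℝ) * ((k : ℝ) - 1) - ((s : ℝ) - 1) * n
        ≤ |2 * (s : ℝ) * ((k : ℝ) - 1) - ((s : ℝ) - 1) * n| := le_abs_self _
      _ = Real.sqrt ((2 * (s : ℝ) * ((k : ℝ) - 1) - ((s : ℝ) - 1) * n) ^ 2) :=
          (Real.sqrt_sq_eq_abs _).symm
      _ ≤ Real.sqrt ((n : ℝ) ^ 2 * (4 * (s : ℝ) * n - 3 * (s : ℝ) ^ 2 + 2 * s + 1)) :=
          Real.sqrt_le_sqrt hD
      _ = (n : ℝ) * Real.sqrt (4 * (s : ℝ) * n - 3 * (s : ℝ) ^ 2 + 2 * s + 1) := by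
          rw [Real.sqrt_mul (sq_nonneg _), Real.sqrt_sq (by linarith : (0 : ℝ) ≤ (n : ℝ))]
  -- conclude
  have h2a : (0 : ℝ) < 2 * (s : ℝ) := by linarith
  have hfinal : (k : ℝ) - 1 ≤ ((n : ℝ) / (2 * s)) *
      (((s : ℝ) - 1) + Real.sqrt (4 * s * n - 3 * (s : ℝ) ^ 2 + 2 * s + 1)) := by
    rw [div_mul_eq_mul_div, le_div_iff₀ h2a]
    nlinarith [hstep4]
  linarith
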